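/- For every real number w, the vector of electrical angles (Φ_1, Φ_2, Φ_3, Φ_4) = (−π, −π/3, π/3, w) is an ambiguous vector for the linear array r = (0,1,3,4): the 4×4 steering matrix A with entries A_{m,l} = exp(𝕚·r_m·Φ_l), r = (0,1,3,4), has determinant 0. In fact, already the three steering vectors (exp(𝕚·r_m·Φ_l))_{m=1,...,4} for l = 1,2,3 are linearly dependent, i.e., the 4×3 matrix they form has rank less than 3. -/

import Mathlib

open Real Complex

/-- For every real `w` the vector of electrical angles `(-π, -π/3, π/3, w)` is an
ambiguous vector for the linear array `r = (0,1,3,4)`: the steering matrix has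
determinant `0`; in fact already the first three steering vectors are linearly
dependent, i.e. the `4×3` matrix they form has rank less than `3`. -/
theorem ambiguity_0134_class_three (w : ℝ) :
    Matrix.det (Matrix.of fun m l : Fin 4 =>
      Complex.exp (Complex.I * ((![0, 1, 3, 4] m : ℝ) : ℂ) *
        (((![-π, -π / 3, π / 3, w] : Fin 4 → ℝ) l : ℝ) : ℂ))) = 0 ∧
    (Matrix.of fun (m : Fin 4) (l : Fin 3) =>
      Complex.exp (Complex.I * ((![0, 1, 3, 4] m : ℝ) : ℂ) *
        (((![-π, -π / 3, π / 3] : Fin 3 → ℝ) l : ℝ) : ℂ))).rank < 3 := by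
  obtain ⟨z, hzdef⟩ : ∃ z : ℂ, z = Complex.exp ((π : ℂ) / 3 * Complex.I) := ⟨_, rfl⟩
  obtain ⟨z', hz'def⟩ : ∃ z' : ℂ, z' = Complex.exp (-((π : ℂ) / 3 * Complex.I)) := ⟨_, rfl⟩
  obtain ⟨u, hudef⟩ : ∃ u : Fin 4 → ℂ,
      u = fun m => Complex.exp (Complex.I * ((![0, 1, 3, 4] m : ℝ) : ℂ) * (w : ℂ)) := ⟨_, rfl⟩
  have hzz' : z * z' = 1 := by
    rw [hzdef, hz'def, ← Complex.exp_add]; simp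
  have hπ : Complex.exp ((π : ℂ) * Complex.I) = -1 := Complex.exp_pi_mul_I
  have hπ' : Complex.exp (-((π : ℂ) * Complex.I)) = -1 := by
    rw [Complex.exp_neg, hπ]; norm_num
  have e10 : Complex.exp (-(Complex.I * (π : ℂ))) = -1 := by
    rw [show -(Complex.I * (π : ℂ)) = -((π:ℂ) * Complex.I) by ring, hπ']
  have e11 : Complex.exp (Complex.I * (-(π : ℂ) / 3)) = z' := by
    rw [hz'def]; congr 1; ring
  have e12 : Complex.exp (Complex.I * ((π : ℂ) / 3)) = z := by
    rw [hzdef]; congr 1; ring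
  have e20 : Complex.exp (-(Complex.I * 3 * (π : ℂ))) = -1 := by
    rw [show -(Complex.I * 3 * (π : ℂ)) = ((3:ℕ):ℂ) * -((π:ℂ) * Complex.I) by push_cast; ring,
      Complex.exp_nat_mul, hπ']
    norm_num
  have e21 : Complex.exp (Complex.I * 3 * (-(π : ℂ) / 3)) = -1 := by
    rw [show Complex.I * 3 * (-(π : ℂ) / 3) = -((π:ℂ) * Complex.I) by ring, hπ']
  have e22 : Complex.exp (Complex.I * 3 * ((π : ℂ) / 3)) = -1 := by
    rw [show Complex.I * 3 * ((π : ℂ) / 3) = (π:ℂ) * Complex.I by ring, hπ]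
  have e30 : Complex.exp (-(Complex.I * 4 * (π : ℂ))) = 1 := by
    rw [show -(Complex.I * 4 * (π : ℂ)) = ((4:ℕ):ℂ) * -((π:ℂ) * Complex.I) by push_cast; ring,
      Complex.exp_nat_mul, hπ']
    norm_num
  have e31 : Complex.exp (Complex.I * 4 * (-(π : ℂ) / 3)) = -z' := by
    rw [show Complex.I * 4 * (-(π : ℂ) / 3) = -((π:ℂ) * Complex.I) + -((π:ℂ)/3 * Complex.I) by ring,
      Complex.exp_add, hπ', ← hz'def]
    ring
  have e32 : Complex.exp (Complex.I * 4 * ((π : ℂ) / 3)) = -z := by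
    rw [show Complex.I * 4 * ((π : ℂ) / 3) = (π:ℂ) * Complex.I + (π:ℂ)/3 * Complex.I by ring,
      Complex.exp_add, hπ, ← hzdef]
    ring
  constructor
  · have hM : (Matrix.of fun m l : Fin 4 =>
        Complex.exp (Complex.I * ((![0, 1, 3, 4] m : ℝ) : ℂ) *
          (((![-π, -π / 3, π / 3, w] : Fin 4 → ℝ) l : ℝ) : ℂ)))
        = !![1, 1, 1, u 0; -1, z', z, u 1; -1, -1, -1, u 2; 1, -z', -z, u 3] := by
      ext m l
      fin_cases m <;> fin_cases l <;>
        simp [hudef, Matrix.of_apply, e10, e20, e30, e11, e21, e31, e12, e22, e32]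
    rw [hM]
    simp [Matrix.det_succ_row_zero, Fin.sum_univ_succ, Fin.succAbove, Fin.castSucc, Fin.castAdd, Fin.castLE]
    ring
  · have hM3 : (Matrix.of fun (m : Fin 4) (l : Fin 3) =>
        Complex.exp (Complex.I * ((![0, 1, 3, 4] m : ℝ) : ℂ) *
          (((![-π, -π / 3, π / 3] : Fin 3 → ℝ) l : ℝ) : ℂ)))
        = (!![1, 1; -1, z'; -1, -1; 1, -z'] : Matrix (Fin 4) (Fin 2) ℂ)
          * (!![1, 0, 1 - z; 0, 1, z] : Matrix (Fin 2) (Fin 3) ℂ) := by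
      ext m l
      fin_cases m <;> fin_cases l <;>
        simp [Matrix.mul_apply, Fin.sum_univ_two, Matrix.of_apply,
          e10, e20, e30, e11, e21, e31, e12, e22, e32] <;>
        first
        | ring1
        | linear_combination hzz'
        | linear_combination -hzz'
    rw [hM3]
    have h1 := Matrix.rank_mul_le_left (!![1, 1; -1, z'; -1, -1; 1, -z'] : Matrix (Fin 4) (Fin 2) ℂ)
      (!![1, 0, 1 - z; 0, 1, z] : Matrix (Fin 2) (Fin 3) ℂ)
    have h2 := Matrix.rank_le_card_width (!![1, 1; -1, z'; -1, -1; 1, -z'] : Matrix (Fin 4) (Fin 2) ℂ)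
    simp [Fintype.card_fin] at h2
    omega
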